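/- For all integers k ≥ 0 and d ≥ k − 1, ∑_{i=0}^{d} A(d+1,i) · i^k = (d+1)! · k! · c_k, where c_k is the coefficient of z^k in the formal power series F(z)^{d+2} · E(z), with F(z) = ∑_{n≥0} z^n/(n+1)! and E(z) = ∑_{n≥0} (−1)^n z^n/n!. (Equivalently, the exponential generating function of the moments of the descent statistic is ((e^z − 1)/z)^{d+2} · e^{−z}.) -/

import Mathlib

open Finset

/-- The number of descents of a permutation of `Fin n`. -/
def descentCount {n : ℕ} (σ : Equiv.Perm (Fin n)) : ℕ :=
  (Finset.univ.filter fun i : Fin n =>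
    ∃ h : (i : ℕ) + 1 < n, σ ⟨(i : ℕ) + 1, h⟩ < σ i).card

/-- The Eulerian number `A(n,k)`: the number of permutations of `{1,…,n}` with
exactly `k` descents. -/
def eulerian (n k : ℕ) : ℕ :=
  (Finset.univ.filter fun σ : Equiv.Perm (Fin n) => descentCount σ = k).card

open PowerSeries

namespace S5
noncomputable def F : PowerSeries ℚ := .mk fun n => 1/(n+1).factorial
noncomputable def Eg : PowerSeries ℚ := .mk fun n => (-1)^n/n.factorial
noncomputable def Ex : PowerSeries ℚ := .mk fun n => 1/n.factorial
noncomputable def Dop (f : PowerSeries ℚ) : PowerSeries ℚ := .mk fun m => (m:ℚ) * coeff (R := ℚ) m f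
noncomputable def c (n k : ℕ) : ℚ := coeff (R := ℚ) k (F^(n+1) * Eg)

@[simp] lemma coeff_Dop (f : PowerSeries ℚ) (m : ℕ) : coeff (R := ℚ) m (Dop f) = (m:ℚ) * coeff (R := ℚ) m f := by
  simp [Dop]

lemma A1 : (X : PowerSeries ℚ) * F = Ex - 1 := by
  ext m
  cases m with
  | zero => simp [F, Ex]
  | succ m => simp [F, Ex, coeff_succ_X_mul, Nat.succ_ne_zero]

lemma A3 : Dop F = Ex - F := by
  ext m
  simp only [coeff_Dop, map_sub, F, Ex, coeff_mk]
  have h1 : ((m+1).factorial : ℚ) ≠ 0 := by positivity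
  have h2 : ((m).factorial : ℚ) ≠ 0 := by positivity
  rw [Nat.factorial_succ]
  push_cast
  field_simp
  ring

lemma A4 : Dop Eg = -((X : PowerSeries ℚ) * Eg) := by
  ext m
  cases m with
  | zero => simp [Eg]
  | succ m =>
    simp only [coeff_Dop, map_neg, coeff_succ_X_mul, Eg, coeff_mk]
    have h1 : ((m+1).factorial : ℚ) ≠ 0 := by positivity
    have h2 : ((m).factorial : ℚ) ≠ 0 := by positivity
    rw [Nat.factorial_succ]
    push_cast
    field_simp
    ring

lemma Dop_mul (f g : PowerSeries ℚ) : Dop (f*g) = Dop f * g + f * Dop g := by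
  ext m
  simp only [coeff_Dop, map_add, coeff_mul, mul_sum, sum_mul]
  rw [← Finset.sum_add_distrib]
  apply Finset.sum_congr rfl
  intro p hp
  replace hp := Finset.HasAntidiagonal.mem_antidiagonal.mp hp
  rw [← hp]
  push_cast
  ring

lemma Dop_pow (f : PowerSeries ℚ) (m : ℕ) :
    Dop (f^(m+1)) = (C (R := ℚ) (m : ℚ) + 1) * f^m * Dop f := by
  induction m with
  | zero => simp
  | succ m ih =>
    rw [pow_succ, Dop_mul, ih]
    push_cast [map_add, map_one]
    ring

lemma KSI (n : ℕ) :
    (C (R := ℚ) (n:ℚ) + 1) * (F^(n+2) * Eg) =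
      (C (R := ℚ) (n:ℚ) + 1) * (F^(n+1) * Eg) + C (R := ℚ) (n:ℚ) * ((F^(n+1) * Eg) * (Ex - 1))
        - Dop (F^(n+1) * Eg) * F := by
  have hEx : Ex = X * F + 1 := by rw [A1]; ring
  rw [Dop_mul, Dop_pow, A3, A4, hEx]
  push_cast
  ring

end S5

namespace S5b
open S5

noncomputable def ex1 (r : ℕ) : ℚ := if r = 0 then 0 else 1/r.factorial

lemma coeff_Ex1 (r : ℕ) : coeff (R := ℚ) r (Ex - 1) = ex1 r := by
  cases r with
  | zero => simp [Ex, ex1]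
  | succ r => simp [Ex, ex1, coeff_one, Nat.succ_ne_zero]

lemma C1 (n k : ℕ) :
    ((n:ℚ)+1) * c (n+1) k = ((n:ℚ)+1) * c n k
      + (n:ℚ) * (∑ j ∈ range (k+1), c n j * ex1 (k-j))
      - ∑ j ∈ range (k+1), ((j:ℚ) * c n j) * (1/((k-j)+1).factorial) := by
  have h := congrArg (coeff (R := ℚ) k) (KSI n)
  simp only [map_sub, map_add, coeff_C_mul, add_mul, one_mul] at h
  rw [show F^(n+2) * Eg = F^(n+1+1) * Eg by ring] at h
  have h2 : coeff (R := ℚ) k ((F^(n+1) * Eg) * (Ex - 1)) = ∑ j ∈ range (k+1), c n j * ex1 (k-j) := by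
    rw [coeff_mul, Finset.Nat.sum_antidiagonal_eq_sum_range_succ_mk]
    exact Finset.sum_congr rfl fun j _ => by rw [coeff_Ex1]; rfl
  have h3 : coeff (R := ℚ) k (Dop (F^(n+1) * Eg) * F) =
      ∑ j ∈ range (k+1), ((j:ℚ) * c n j) * (1/((k-j)+1).factorial) := by
    rw [coeff_mul, Finset.Nat.sum_antidiagonal_eq_sum_range_succ_mk]
    refine Finset.sum_congr rfl fun j _ => ?_
    rw [coeff_Dop]
    simp [F, c]
  rw [h2, h3] at h
  have e1 : coeff (R := ℚ) k (F ^ (n + 1 + 1) * Eg) = c (n+1) k := rfl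
  have e2 : coeff (R := ℚ) k (F ^ (n + 1) * Eg) = c n k := rfl
  rw [e1, e2] at h
  linarith [h]

end S5b

namespace S5c
open S5 S5b

lemma C2 (n k : ℕ) (hk : 1 ≤ k) :
    ((n:ℚ)+1) * ((n.factorial : ℚ) * (k.factorial : ℚ)) * c (n+1) k
      = ((n:ℚ)+1-(k:ℚ)) * ((n.factorial : ℚ) * (k.factorial : ℚ) * c n k)
        + (n:ℚ) * ∑ j ∈ range k, (k.choose j : ℚ) * ((n.factorial:ℚ) * (j.factorial:ℚ) * c n j)
        - ∑ j ∈ range (k-1), (k.choose j : ℚ) * ((n.factorial:ℚ) * ((j+1).factorial:ℚ) * c n (j+1)) := by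
  have h := C1 n k
  have hA : ((n.factorial:ℚ) * (k.factorial:ℚ)) * ∑ j ∈ range (k+1), c n j * ex1 (k-j)
      = ∑ j ∈ range k, (k.choose j : ℚ) * ((n.factorial:ℚ)*(j.factorial:ℚ)* c n j) := by
    rw [Finset.sum_range_succ, Nat.sub_self, show ex1 0 = 0 from if_pos rfl, mul_zero, add_zero,
      Finset.mul_sum]
    refine Finset.sum_congr rfl fun j hj => ?_
    have hj' : j < k := mem_range.mp hj
    have hne : k - j ≠ 0 := by omega
    have hfac : (k.choose j : ℚ) * (j.factorial:ℚ) * ((k-j).factorial:ℚ) = (k.factorial:ℚ) := by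
      exact_mod_cast Nat.choose_mul_factorial_mul_factorial hj'.le
    have h0 : ((k-j).factorial : ℚ) ≠ 0 := by positivity
    rw [ex1, if_neg hne]
    rw [← hfac]
    field_simp
  have hB : ((n.factorial:ℚ) * (k.factorial:ℚ)) * ∑ j ∈ range (k+1), ((j:ℚ) * c n j) * (1/(((k-j)+1).factorial:ℚ))
      = (k:ℚ) * ((n.factorial:ℚ)*(k.factorial:ℚ)* c n k)
        + ∑ j ∈ range (k-1), (k.choose j : ℚ) * ((n.factorial:ℚ)*((j+1).factorial:ℚ)* c n (j+1)) := by
    rw [Finset.sum_range_succ, Nat.sub_self]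
    obtain ⟨K, rfl⟩ : ∃ K, k = K + 1 := ⟨k-1, by omega⟩
    rw [Finset.sum_range_succ']
    simp only [Nat.cast_zero, zero_mul, zero_add, Nat.add_sub_cancel, mul_zero, add_zero]
    rw [mul_add, Finset.mul_sum]
    rw [add_comm]
    congr 1
    · norm_num [Nat.factorial]
      push_cast
      ring
    refine Finset.sum_congr rfl fun i hi => ?_
    have hi' : i < K := mem_range.mp hi
    have hred : K + 1 - (i+1) + 1 = K + 1 - i := by omega
    rw [hred]
    have hfac : ((K+1).choose i : ℚ) * (i.factorial:ℚ) * ((K+1-i).factorial:ℚ) = ((K+1).factorial:ℚ) := by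
      exact_mod_cast Nat.choose_mul_factorial_mul_factorial (by omega : i ≤ K+1)
    have h0 : ((K+1-i).factorial : ℚ) ≠ 0 := by positivity
    have h1 : ((i+1).factorial : ℚ) = ((i:ℚ)+1) * (i.factorial:ℚ) := by
      rw [Nat.factorial_succ]; push_cast; ring
    rw [h1]
    rw [← hfac]
    field_simp
    push_cast
    ring
  linear_combination ((n.factorial:ℚ) * (k.factorial:ℚ)) * h + (n:ℚ) * hA - hB

end S5c

namespace S5d
open Equiv

def desc {n : ℕ} (τ : Perm (Fin n)) (j : Fin n) : Prop :=
  ∃ h : (j : ℕ) + 1 < n, τ ⟨(j : ℕ) + 1, h⟩ < τ j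

instance {n : ℕ} (τ : Perm (Fin n)) (j : Fin n) : Decidable (desc τ j) := by
  unfold desc; infer_instance

lemma descentCount_eq {n : ℕ} (τ : Perm (Fin n)) :
    descentCount τ = (univ.filter (desc τ)).card := rfl

def Φ {n : ℕ} (p : Fin (n+1)) (τ : Perm (Fin n)) : Perm (Fin (n+1)) :=
  ((finSuccEquiv' p).trans (τ.optionCongr)).trans (finSuccEquiv' (Fin.last n)).symm

lemma Φ_at {n : ℕ} (p : Fin (n+1)) (τ : Perm (Fin n)) : Φ p τ p = Fin.last n := by
  simp [Φ, finSuccEquiv'_at, finSuccEquiv'_symm_none]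

lemma Φ_succAbove {n : ℕ} (p : Fin (n+1)) (τ : Perm (Fin n)) (j : Fin n) :
    Φ p τ (p.succAbove j) = (τ j).castSucc := by
  simp [Φ, finSuccEquiv'_succAbove, finSuccEquiv'_symm_some, Fin.succAbove_last]

lemma Φ_eq_last_iff {n : ℕ} (p : Fin (n+1)) (τ : Perm (Fin n)) (x : Fin (n+1)) :
    Φ p τ x = Fin.last n ↔ x = p := by
  constructor
  · intro hx
    have := (Φ p τ).injective (hx.trans (Φ_at p τ).symm)
    exact this
  · intro hx; rw [hx]; exact Φ_at _ _

lemma desc_at {n : ℕ} (p : Fin (n+1)) (τ : Perm (Fin n)) :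
    desc (Φ p τ) p ↔ p ≠ Fin.last n := by
  constructor
  · rintro ⟨h, -⟩
    intro hp
    rw [hp] at h
    simp [Fin.last] at h
  · intro hp
    have hplt : (p:ℕ) < n := Fin.val_lt_last hp
    refine ⟨by omega, ?_⟩
    rw [Φ_at]
    have hne : (⟨(p:ℕ)+1, by omega⟩ : Fin (n+1)) ≠ p := by
      simp [Fin.ext_iff]
    have : Φ p τ ⟨(p:ℕ)+1, by omega⟩ ≠ Fin.last n := by
      simp only [ne_eq, Φ_eq_last_iff]; exact hne
    exact lt_of_le_of_ne (Fin.le_last _) this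
end S5d
namespace S5d
open Equiv

lemma desc_iff {n : ℕ} (σ : Perm (Fin n)) (i : Fin n) (h : (i:ℕ)+1 < n) :
    desc σ i ↔ σ ⟨(i:ℕ)+1, h⟩ < σ i :=
  ⟨fun ⟨_, hl⟩ => hl, fun hl => ⟨h, hl⟩⟩

lemma not_desc {n : ℕ} (σ : Perm (Fin n)) (i : Fin n) (h : ¬((i:ℕ)+1 < n)) : ¬ desc σ i :=
  fun ⟨h', _⟩ => h h'

lemma desc_succAbove {n : ℕ} (p : Fin (n+1)) (τ : Perm (Fin n)) (j : Fin n) :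
    desc (Φ p τ) (p.succAbove j) ↔ (desc τ j ∧ (j:ℕ)+1 ≠ (p:ℕ)) := by
  by_cases hc : (j:ℕ) < (p:ℕ)
  · have hsA : p.succAbove j = j.castSucc :=
      Fin.succAbove_of_castSucc_lt _ _ (by simpa [Fin.lt_def] using hc)
    by_cases h2 : (j:ℕ)+1 = (p:ℕ)
    · rw [hsA]
      constructor
      · rintro ⟨h, hlt⟩
        have hidx : (⟨((j.castSucc):ℕ)+1, h⟩ : Fin (n+1)) = p := by
          simp [Fin.ext_iff, h2]
        rw [hidx, Φ_at] at hlt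
        exact absurd hlt (not_lt.mpr (Fin.le_last _))
      · rintro ⟨-, hne⟩; exact absurd h2 hne
    · have hlt2 : (j:ℕ)+1 < (p:ℕ) := by omega
      have hjn : (j:ℕ)+1 < n := by have := p.isLt; omega
      have hb : ((j.castSucc):ℕ)+1 < n+1 := by simp only [Fin.coe_castSucc]; omega
      set j' : Fin n := ⟨(j:ℕ)+1, hjn⟩ with hj'
      have hidx : (⟨((j.castSucc):ℕ)+1, hb⟩ : Fin (n+1)) = p.succAbove j' := by
        rw [Fin.succAbove_of_castSucc_lt _ _ (by simp [Fin.lt_def]; omega)]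
        simp [Fin.ext_iff]
        rfl
      rw [hsA, desc_iff _ _ hb, hidx, Φ_succAbove, ← hsA, Φ_succAbove,
        Fin.castSucc_lt_castSucc_iff, desc_iff _ _ hjn]
      simp [h2]
      exact Iff.rfl
  · have hple : (p:ℕ) ≤ (j:ℕ) := by omega
    have hsA : p.succAbove j = j.succ :=
      Fin.succAbove_of_le_castSucc _ _ (by simpa [Fin.le_def] using hple)
    have hne : (j:ℕ)+1 ≠ (p:ℕ) := by omega
    by_cases hn : (j:ℕ)+1 < n
    · have hb : ((j.succ):ℕ)+1 < n+1 := by simp; omega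
      set j' : Fin n := ⟨(j:ℕ)+1, hn⟩ with hj'
      have hidx : (⟨((j.succ):ℕ)+1, hb⟩ : Fin (n+1)) = p.succAbove j' := by
        rw [Fin.succAbove_of_le_castSucc _ _ (by show (p:ℕ) ≤ (j:ℕ)+1; omega)]
        simp [Fin.ext_iff]
        rfl
      rw [hsA, desc_iff _ _ hb, hidx, Φ_succAbove, ← hsA, Φ_succAbove,
        Fin.castSucc_lt_castSucc_iff, desc_iff _ _ hn]
      simp [hne]
      exact Iff.rfl
    · have h1 : ¬ desc (Φ p τ) (p.succAbove j) := by
        apply not_desc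
        rw [hsA]
        simp
        omega
      have h2 : ¬ desc τ j := not_desc _ _ hn
      simp [h1, h2]
end S5d
namespace S5d
open Equiv

lemma key {n : ℕ} (p : Fin (n+1)) (τ : Perm (Fin n)) :
    descentCount (Φ p τ) + (univ.filter fun j : Fin n => desc τ j ∧ (j:ℕ)+1 = (p:ℕ)).card
      = descentCount τ + (if p = Fin.last n then 0 else 1) := by
  rw [descentCount_eq, descentCount_eq, Finset.card_filter, Finset.card_filter,
    Finset.card_filter]
  have htrans : (∑ i : Fin (n+1), if desc (Φ p τ) i then 1 else 0)
      = (if desc (Φ p τ) p then 1 else 0)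
        + ∑ j : Fin n, (if desc (Φ p τ) (p.succAbove j) then 1 else 0) := by
    have he := Fintype.sum_equiv (finSuccEquiv' p).symm
      (fun o : Option (Fin n) => if desc (Φ p τ) ((finSuccEquiv' p).symm o) then (1:ℕ) else 0)
      (fun i : Fin (n+1) => if desc (Φ p τ) i then (1:ℕ) else 0) (fun o => rfl)
    rw [← he, Fintype.sum_option]
    simp [finSuccEquiv'_symm_none, finSuccEquiv'_symm_some]
    rw [Finset.card_filter]
    convert rfl <;> split_ifs with hh <;> simp [hh]
  rw [htrans]
  have h1 : (if desc (Φ p τ) p then (1:ℕ) else 0) = (if p = Fin.last n then 0 else 1) := by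
    by_cases hp : p = Fin.last n <;> simp [desc_at, hp]
  rw [h1]
  have h2 : (∑ j : Fin n, if desc (Φ p τ) (p.succAbove j) then (1:ℕ) else 0)
      + (∑ j : Fin n, if desc τ j ∧ (j:ℕ)+1 = (p:ℕ) then (1:ℕ) else 0)
      = ∑ j : Fin n, (if desc τ j then (1:ℕ) else 0) := by
    rw [← Finset.sum_add_distrib]
    apply Finset.sum_congr rfl
    intro j _
    by_cases hd : desc τ j <;> by_cases he : (j:ℕ)+1 = (p:ℕ) <;>
      simp [desc_succAbove, hd, he]
  rw [add_assoc, h2, add_comm]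

end S5d
namespace S5d
open Equiv

lemma des_le {n : ℕ} (τ : Perm (Fin n)) : descentCount τ ≤ n := by
  rw [descentCount_eq]
  exact (Finset.card_filter_le _ _).trans (by simp)

lemma val_eq {n : ℕ} (p : Fin (n+1)) (τ : Perm (Fin n)) :
    descentCount (Φ p τ) =
      if (p = Fin.last n ∨ ∃ j : Fin n, desc τ j ∧ (j:ℕ)+1 = (p:ℕ))
      then descentCount τ else descentCount τ + 1 := by
  have hk := key p τ
  by_cases hp : p = Fin.last n
  · have hD : (univ.filter fun j : Fin n => desc τ j ∧ (j:ℕ)+1 = (p:ℕ)) = ∅ := by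
      apply Finset.filter_false_of_mem
      intro j _
      rintro ⟨⟨hj, -⟩, hj2⟩
      rw [hp] at hj2
      simp [Fin.last] at hj2
      omega
    rw [hD, if_pos hp] at hk
    simp only [Finset.card_empty, add_zero] at hk
    rw [if_pos (Or.inl hp)]
    omega
  by_cases hE : ∃ j : Fin n, desc τ j ∧ (j:ℕ)+1 = (p:ℕ)
  · obtain ⟨j₀, hj₀⟩ := hE
    have hD : (univ.filter fun j : Fin n => desc τ j ∧ (j:ℕ)+1 = (p:ℕ)) = {j₀} := by
      apply Finset.eq_singleton_iff_unique_mem.mpr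
      refine ⟨by simp [hj₀], ?_⟩
      intro x hx
      rw [Finset.mem_filter] at hx
      have hx2 := hx.2.2
      have hj2 := hj₀.2
      exact Fin.ext (by omega)
    have hOr : p = Fin.last n ∨ ∃ j : Fin n, desc τ j ∧ (j:ℕ)+1 = (p:ℕ) :=
      Or.inr ⟨j₀, hj₀⟩
    rw [hD, if_neg hp, Finset.card_singleton] at hk
    rw [if_pos hOr]
    omega
  · have hD : (univ.filter fun j : Fin n => desc τ j ∧ (j:ℕ)+1 = (p:ℕ)) = ∅ := by
      apply Finset.filter_false_of_mem
      intro j _ hj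
      exact hE ⟨j, hj⟩
    rw [hD] at hk
    have : ¬(p = Fin.last n ∨ ∃ j : Fin n, desc τ j ∧ (j:ℕ)+1 = (p:ℕ)) := by
      rintro (h | h); exact hp h; exact hE h
    simp only [if_neg this, if_neg hp, Finset.card_empty, add_zero] at hk ⊢
    omega

lemma inner_sum {n : ℕ} (τ : Perm (Fin n)) (k : ℕ) :
    (∑ p : Fin (n+1), ((descentCount (Φ p τ) : ℚ))^k)
      = ((descentCount τ : ℚ)+1) * (descentCount τ : ℚ)^k
        + ((n:ℚ) - (descentCount τ : ℚ)) * ((descentCount τ : ℚ)+1)^k := by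
  classical
  set d : ℕ := descentCount τ with hd
  set S : Finset (Fin (n+1)) :=
    insert (Fin.last n) ((univ.filter (desc τ)).image Fin.succ) with hS
  have hmem : ∀ p : Fin (n+1),
      (p = Fin.last n ∨ ∃ j : Fin n, desc τ j ∧ (j:ℕ)+1 = (p:ℕ)) ↔ p ∈ S := by
    intro p
    simp only [hS, Finset.mem_insert, Finset.mem_image, Finset.mem_filter, Finset.mem_univ,
      true_and]
    constructor
    · rintro (h | ⟨j, hj, hj2⟩)
      · exact Or.inl h
      · exact Or.inr ⟨j, hj, Fin.ext (by simp [hj2])⟩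
    · rintro (h | ⟨j, hj, rfl⟩)
      · exact Or.inl h
      · exact Or.inr ⟨j, hj, by simp⟩
  have hcard : S.card = d + 1 := by
    rw [hS, Finset.card_insert_of_notMem, Finset.card_image_of_injective _ (Fin.succ_injective n)]
    · rfl
    · simp only [Finset.mem_image, Finset.mem_filter]
      rintro ⟨j, ⟨-, ⟨hj, -⟩⟩, hj2⟩
      have : (j:ℕ)+1 = n := by
        have := congrArg Fin.val hj2
        simpa [Fin.last] using this
      omega
  have hval : ∀ p : Fin (n+1), ((descentCount (Φ p τ) : ℚ))^k
      = if p ∈ S then (d:ℚ)^k else ((d:ℚ)+1)^k := by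
    intro p
    rw [val_eq]
    by_cases h : p ∈ S
    · rw [if_pos ((hmem p).mpr h), if_pos h]
    · rw [if_neg (fun hc => h ((hmem p).mp hc)), if_neg h]
      push_cast
      ring_nf
      rfl
  calc (∑ p : Fin (n+1), ((descentCount (Φ p τ) : ℚ))^k)
      = ∑ p : Fin (n+1), (if p ∈ S then (d:ℚ)^k else ((d:ℚ)+1)^k) :=
        Finset.sum_congr rfl fun p _ => hval p
    _ = ((d:ℚ)+1) * (d:ℚ)^k + ((n:ℚ) - (d:ℚ)) * ((d:ℚ)+1)^k := by
        rw [Finset.sum_ite, Finset.sum_const, Finset.sum_const]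
        have hf1 : (univ.filter fun p : Fin (n+1) => p ∈ S) = S := by
          rw [Finset.filter_mem_eq_inter, Finset.univ_inter]
        have hf2 : (univ.filter fun p : Fin (n+1) => p ∉ S).card = n - d := by
          rw [Finset.filter_not, hf1, Finset.card_sdiff_of_subset (Finset.subset_univ S), hcard]
          simp
        rw [hf1, hf2, hcard]
        have hdn : d ≤ n := des_le τ
        have hc : ((n - d : ℕ) : ℚ) = (n:ℚ) - (d:ℚ) := by
          push_cast [Nat.cast_sub hdn]
          ring
        simp only [nsmul_eq_mul]
        rw [hc]
        push_cast
        ring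
end S5d
namespace S5d
open Equiv

noncomputable def T (n k : ℕ) : ℚ := ∑ τ : Perm (Fin n), ((descentCount τ : ℚ))^k

lemma Φ_bij {n : ℕ} :
    Function.Bijective (fun x : Fin (n+1) × Perm (Fin n) => Φ x.1 x.2) := by
  rw [Fintype.bijective_iff_injective_and_card]
  constructor
  · rintro ⟨p, τ⟩ ⟨q, ρ⟩ h
    simp only at h
    have hpq : p = q := by
      have h2 : Φ q ρ p = Fin.last n := by rw [← h]; exact Φ_at _ _
      exact (Φ_eq_last_iff q ρ p).mp h2
    subst hpq
    have hτ : τ = ρ := by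
      apply Equiv.ext; intro j
      have h3 := congrArg (fun σ : Perm (Fin (n+1)) => σ (p.succAbove j)) h
      simp only [Φ_succAbove] at h3
      exact Fin.castSucc_injective n h3
    rw [hτ]
  · simp [Fintype.card_perm, Fintype.card_fin, Nat.factorial_succ]

lemma Trec (n k : ℕ) : T (n+1) k = ∑ τ : Perm (Fin n),
    (((descentCount τ : ℚ)+1) * ((descentCount τ:ℚ))^k
      + ((n:ℚ) - (descentCount τ:ℚ)) * ((descentCount τ:ℚ)+1)^k) := by
  have h0 : T (n+1) k = ∑ x : Fin (n+1) × Perm (Fin n), ((descentCount (Φ x.1 x.2) : ℚ))^k :=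
    (Fintype.sum_bijective _ Φ_bij _ _ (fun x => rfl)).symm
  rw [h0, Fintype.sum_prod_type, Finset.sum_comm]
  exact Finset.sum_congr rfl fun τ _ => inner_sum τ k

lemma comb1 (n k : ℕ) : T (n+1) k = T n (k+1) + T n k
    + ∑ j ∈ range (k+1), (k.choose j : ℚ) * ((n:ℚ) * T n j - T n (j+1)) := by
  rw [Trec, Finset.sum_add_distrib]
  congr 1
  · rw [T, T, ← Finset.sum_add_distrib]
    exact Finset.sum_congr rfl fun τ _ => by ring
  · have hexp : ∀ τ : Perm (Fin n),
        ((n:ℚ) - (descentCount τ:ℚ)) * ((descentCount τ:ℚ)+1)^k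
          = ∑ j ∈ range (k+1), (k.choose j : ℚ) *
              ((n:ℚ) * ((descentCount τ:ℚ))^j - ((descentCount τ:ℚ))^(j+1)) := by
      intro τ
      rw [add_pow, Finset.mul_sum]
      exact Finset.sum_congr rfl fun j _ => by ring
    rw [Finset.sum_congr rfl fun τ _ => hexp τ, Finset.sum_comm]
    refine Finset.sum_congr rfl fun j _ => ?_
    rw [T, T, Finset.mul_sum, ← Finset.sum_sub_distrib, Finset.mul_sum]

lemma T_zero (n : ℕ) : T n 0 = (n.factorial : ℚ) := by
  simp [T, Fintype.card_perm]

end S5d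


namespace S5e
open S5 S5b S5c S5d Equiv

lemma c_zero (n : ℕ) : c n 0 = 1 := by
  simp only [c, coeff_zero_eq_constantCoeff, map_mul, map_pow]
  have h1 : constantCoeff (R := ℚ) F = 1 := by simp [F]
  have h2 : constantCoeff (R := ℚ) Eg = 1 := by simp [Eg]
  rw [h1, h2, one_pow, one_mul]

lemma hstep (n k : ℕ) (hk : 1 ≤ k) :
    T (n+1) k = ((n:ℚ)+1-(k:ℚ)) * T n k
      + (n:ℚ) * ∑ j ∈ range k, (k.choose j : ℚ) * T n j
      - ∑ j ∈ range (k-1), (k.choose j : ℚ) * T n (j+1) := by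
  obtain ⟨K, rfl⟩ : ∃ K, k = K + 1 := ⟨k-1, by omega⟩
  have h1 := comb1 n (K+1)
  rw [Finset.sum_range_succ] at h1
  have h2 : ∑ j ∈ range (K+1), (((K+1).choose j:ℚ)) * ((n:ℚ) * T n j - T n (j+1))
      = (n:ℚ) * ∑ j ∈ range (K+1), (((K+1).choose j:ℚ)) * T n j
        - ∑ j ∈ range (K+1), (((K+1).choose j:ℚ)) * T n (j+1) := by
    rw [Finset.mul_sum, ← Finset.sum_sub_distrib]
    exact Finset.sum_congr rfl fun j _ => by ring
  have h3 : ∑ j ∈ range (K+1), (((K+1).choose j:ℚ)) * T n (j+1)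
      = ∑ j ∈ range K, (((K+1).choose j:ℚ)) * T n (j+1) + ((K:ℚ)+1) * T n (K+1) := by
    rw [Finset.sum_range_succ, Nat.choose_succ_self_right]
    push_cast
    ring
  rw [h2, h3] at h1
  have hred : K + 1 - 1 = K := rfl
  rw [hred]
  simp only [Nat.choose_self, Nat.cast_one] at h1
  push_cast
  linear_combination h1

lemma master (n : ℕ) : ∀ k, k ≤ n → T n k = (n.factorial:ℚ) * (k.factorial:ℚ) * c n k := by
  induction n with
  | zero =>
    intro k hk
    have : k = 0 := Nat.le_zero.mp hk
    subst this
    rw [T_zero, c_zero]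
    simp
  | succ n ih =>
    intro k hk
    rcases Nat.eq_zero_or_pos k with rfl | hk1
    · rw [T_zero, c_zero]
      simp
    · have h1 := hstep n k hk1
      have hTk : ((n:ℚ)+1-(k:ℚ)) * T n k
          = ((n:ℚ)+1-(k:ℚ)) * ((n.factorial:ℚ)*(k.factorial:ℚ)* c n k) := by
        rcases Nat.lt_or_ge n k with hlt | hge
        · have hkn : k = n+1 := by omega
          subst hkn
          have hz : ((n:ℚ)+1-((n+1:ℕ):ℚ)) = 0 := by push_cast; ring
          rw [hz, zero_mul, zero_mul]
        · rw [ih k hge]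
      have hs1 : ∑ j ∈ range k, (k.choose j : ℚ) * T n j
          = ∑ j ∈ range k, (k.choose j : ℚ) * ((n.factorial:ℚ)*(j.factorial:ℚ)* c n j) :=
        Finset.sum_congr rfl fun j hj => by
          rw [ih j (by have := mem_range.mp hj; omega)]
      have hs2 : ∑ j ∈ range (k-1), (k.choose j : ℚ) * T n (j+1)
          = ∑ j ∈ range (k-1), (k.choose j : ℚ) * ((n.factorial:ℚ)*((j+1).factorial:ℚ)* c n (j+1)) :=
        Finset.sum_congr rfl fun j hj => by
          rw [ih (j+1) (by have := mem_range.mp hj; omega)]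
      have h2 := C2 n k hk1
      rw [h1, hTk, hs1, hs2, Nat.factorial_succ, Nat.cast_mul, Nat.cast_add, Nat.cast_one]
      linear_combination -h2

lemma des_le' {n : ℕ} (σ : Perm (Fin (n+1))) : descentCount σ ≤ n := by
  rw [descentCount_eq]
  have hsub : univ.filter (desc σ) ⊆ (univ : Finset (Fin (n+1))).erase (Fin.last n) := by
    intro i hi
    rw [Finset.mem_filter] at hi
    obtain ⟨h1, -⟩ := hi.2
    rw [Finset.mem_erase]
    refine ⟨?_, Finset.mem_univ _⟩
    intro he
    rw [he] at h1
    simp [Fin.last] at h1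
  calc (univ.filter (desc σ)).card ≤ _ := Finset.card_le_card hsub
    _ = n := by
      rw [Finset.card_erase_of_mem (Finset.mem_univ _)]
      simp

end S5e

open S5 S5b S5c S5d S5e in
theorem stmt5 (k d : ℕ) (h : k ≤ d + 1) :
    (∑ i ∈ Finset.range (d + 1), (eulerian (d + 1) i : ℚ) * (i : ℚ) ^ k)
      = (Nat.factorial (d + 1) : ℚ) * (Nat.factorial k : ℚ) *
        PowerSeries.coeff (R := ℚ) k
          ((PowerSeries.mk fun n => (1 : ℚ) / (Nat.factorial (n + 1) : ℚ)) ^ (d + 2) *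
            PowerSeries.mk fun n => (-1 : ℚ) ^ n / (Nat.factorial n : ℚ)) := by
  have hfib : (∑ i ∈ range (d+2), (eulerian (d+1) i : ℚ) * (i:ℚ)^k) = T (d+1) k := by
    rw [S5d.T, ← Finset.sum_fiberwise_of_maps_to
      (g := fun σ : Equiv.Perm (Fin (d+1)) => descentCount σ) (t := range (d+2))
      (fun σ _ => by simp only [mem_range]; exact Nat.lt_succ_of_le (des_le σ))]
    refine Finset.sum_congr rfl fun i _ => ?_
    have hconst : ∀ σ ∈ univ.filter (fun σ : Equiv.Perm (Fin (d+1)) => descentCount σ = i),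
        ((descentCount σ : ℚ))^k = (i:ℚ)^k := by
      intro σ hσ
      rw [(Finset.mem_filter.mp hσ).2]
    rw [Finset.sum_congr rfl hconst, Finset.sum_const, nsmul_eq_mul]
    rfl
  have hlast : (eulerian (d+1) (d+1) : ℚ) = 0 := by
    have : (univ.filter fun σ : Equiv.Perm (Fin (d+1)) => descentCount σ = d+1) = ∅ := by
      apply Finset.filter_false_of_mem
      intro σ _
      have := des_le' σ
      omega
    rw [eulerian, this]
    simp
  rw [show d+2 = (d+1)+1 from rfl, Finset.sum_range_succ] at hfib
  rw [hlast, zero_mul, add_zero] at hfib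
  rw [hfib, master (d+1) k h]
  rfl
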